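/- For curves x(t), p(t) in a Lie algebra with inner product given by the negative Killing form, the Hamiltonian H*(x,p) = −(1/2)⟨x, [p,[p,x]]⟩ + V(x) generates the flow ẋ = [x,[p,x]], ṗ = [p,[p,x]] − ∇V(x). -/

import Mathlib

open Matrix

attribute [local instance] Matrix.normedAddCommGroup Matrix.normedSpace

/-- The inner product `⟨ξ,η⟩ = −(1/2) trace (ξη)` on `so(n)` (a negative multiple of the
Killing form). -/
noncomputable def ip {n : ℕ} (ξ η : Matrix (Fin n) (Fin n) ℝ) : ℝ :=
  -(1 / 2 : ℝ) * Matrix.trace (ξ * η)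

/-- The bracket `[a,b] = ab − ba`. -/
def brk {n : ℕ} (a b : Matrix (Fin n) (Fin n) ℝ) : Matrix (Fin n) (Fin n) ℝ :=
  a * b - b * a

section aux

variable {n : ℕ}

lemma my_ip_comm (a b : Matrix (Fin n) (Fin n) ℝ) : ip a b = ip b a := by
  unfold ip; rw [Matrix.trace_mul_comm]

lemma my_ip_brk (a b c : Matrix (Fin n) (Fin n) ℝ) : ip a (brk b c) = ip (brk a b) c := by
  unfold ip brk
  rw [Matrix.mul_sub, Matrix.sub_mul, Matrix.trace_sub, Matrix.trace_sub,
    ← mul_assoc a c b, Matrix.trace_mul_cycle a c b]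
  simp [mul_assoc]

lemma my_brk_skew (a b : Matrix (Fin n) (Fin n) ℝ) : brk a b = -brk b a := by
  unfold brk; abel

lemma brk_add_left (a b c : Matrix (Fin n) (Fin n) ℝ) : brk (a + b) c = brk a c + brk b c := by
  unfold brk; noncomm_ring

lemma brk_add_right (a b c : Matrix (Fin n) (Fin n) ℝ) : brk a (b + c) = brk a b + brk a c := by
  unfold brk; noncomm_ring

lemma brk_smul_left (r : ℝ) (a b : Matrix (Fin n) (Fin n) ℝ) : brk (r • a) b = r • brk a b := by
  unfold brk; rw [smul_mul_assoc, mul_smul_comm, smul_sub]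

lemma brk_smul_right (r : ℝ) (a b : Matrix (Fin n) (Fin n) ℝ) : brk a (r • b) = r • brk a b := by
  unfold brk; rw [smul_mul_assoc, mul_smul_comm, smul_sub]

lemma brk_neg_right (a b : Matrix (Fin n) (Fin n) ℝ) : brk a (-b) = -brk a b := by
  unfold brk; noncomm_ring

lemma brk_neg_left (a b : Matrix (Fin n) (Fin n) ℝ) : brk (-a) b = -brk a b := by
  unfold brk; noncomm_ring

lemma ip_add_right (a b c : Matrix (Fin n) (Fin n) ℝ) : ip a (b + c) = ip a b + ip a c := by
  unfold ip; rw [Matrix.mul_add, Matrix.trace_add]; ring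

lemma ip_add_left (a b c : Matrix (Fin n) (Fin n) ℝ) : ip (a + b) c = ip a c + ip b c := by
  unfold ip; rw [Matrix.add_mul, Matrix.trace_add]; ring

lemma ip_smul_right (r : ℝ) (a b : Matrix (Fin n) (Fin n) ℝ) : ip a (r • b) = r * ip a b := by
  unfold ip; rw [mul_smul_comm, Matrix.trace_smul]; simp; ring

lemma ip_smul_left (r : ℝ) (a b : Matrix (Fin n) (Fin n) ℝ) : ip (r • a) b = r * ip a b := by
  unfold ip; rw [smul_mul_assoc, Matrix.trace_smul]; simp; ring

lemma ip_neg_right (a b : Matrix (Fin n) (Fin n) ℝ) : ip a (-b) = -ip a b := by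
  unfold ip; simp

lemma ip_neg_left (a b : Matrix (Fin n) (Fin n) ℝ) : ip (-a) b = -ip a b := by
  unfold ip; simp

end aux

/-- The Hamiltonian `H*(x,p) = −(1/2)⟨x,[p,[p,x]]⟩ + V(x)` generates the flow
`ẋ = [x,[p,x]]`, `ṗ = [p,[p,x]] − ∇V(x)`: its partial gradient in `p` is `[x,[p,x]]` and its
partial gradient in `x` is `∇V(x) − [p,[p,x]]` (so that `ṗ = −∂H*/∂x = [p,[p,x]] − ∇V(x)`). -/
theorem hamiltonian_generates_double_bracket_flow {n : ℕ}
    (V : Matrix (Fin n) (Fin n) ℝ → ℝ)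
    (gradV : Matrix (Fin n) (Fin n) ℝ → Matrix (Fin n) (Fin n) ℝ)
    (hgrad : ∀ x h : Matrix (Fin n) (Fin n) ℝ, xᵀ = -x → hᵀ = -h →
      HasDerivAt (fun ε : ℝ => V (x + ε • h)) (ip (gradV x) h) 0)
    (x p : Matrix (Fin n) (Fin n) ℝ) (hx : xᵀ = -x) (hp : pᵀ = -p) :
    (∀ h : Matrix (Fin n) (Fin n) ℝ, hᵀ = -h →
      HasDerivAt (fun ε : ℝ => -(1 / 2 : ℝ) * ip x (brk (p + ε • h) (brk (p + ε • h) x)) + V x)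
        (ip (brk x (brk p x)) h) 0) ∧
    (∀ h : Matrix (Fin n) (Fin n) ℝ, hᵀ = -h →
      HasDerivAt
        (fun ε : ℝ =>
          -(1 / 2 : ℝ) * ip (x + ε • h) (brk p (brk p (x + ε • h))) + V (x + ε • h))
        (ip (gradV x) h - ip (brk p (brk p x)) h) 0) := by
  constructor
  · intro h hh
    have h1 : ip x (brk p (brk h x)) = - ip (brk x (brk p x)) h := by
      rw [my_ip_brk, my_ip_brk, my_ip_comm, my_ip_brk, my_brk_skew x p, brk_neg_right,
        ip_neg_left]
    have h2 : ip x (brk h (brk p x)) = - ip (brk x (brk p x)) h := by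
      rw [my_ip_brk, my_ip_comm, my_ip_brk, my_brk_skew (brk p x) x, ip_neg_left]
    have hfun : (fun ε : ℝ =>
        -(1 / 2 : ℝ) * ip x (brk (p + ε • h) (brk (p + ε • h) x)) + V x)
        = fun ε : ℝ => (-(1 / 2 : ℝ) * ip x (brk p (brk p x)) + V x)
            + (ip (brk x (brk p x)) h) * ε
            + (-(1 / 2 : ℝ) * ip x (brk h (brk h x))) * ε ^ 2 := by
      funext ε
      simp only [brk_add_left, brk_smul_left, brk_add_right, brk_smul_right,
        ip_add_right, ip_smul_right, smul_smul, h1, h2]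
      ring
    rw [hfun]
    have := ((hasDerivAt_const (0 : ℝ)
        (-(1 / 2 : ℝ) * ip x (brk p (brk p x)) + V x)).add
        ((hasDerivAt_id (0 : ℝ)).const_mul (ip (brk x (brk p x)) h))).add
        ((hasDerivAt_pow 2 (0 : ℝ)).const_mul (-(1 / 2 : ℝ) * ip x (brk h (brk h x))))
    simpa [Pi.add_def] using this
  · intro h hh
    have h3 : ip h (brk p (brk p x)) = ip (brk p (brk p x)) h := my_ip_comm _ _
    have h4 : ip x (brk p (brk p h)) = ip (brk p (brk p x)) h := by
      rw [my_ip_brk, my_ip_brk, my_brk_skew x p, brk_neg_left, ip_neg_left,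
        my_brk_skew (brk p x) p, ip_neg_left, neg_neg]
    have hq : HasDerivAt (fun ε : ℝ =>
        -(1 / 2 : ℝ) * ip (x + ε • h) (brk p (brk p (x + ε • h))))
        (-(ip (brk p (brk p x)) h)) 0 := by
      have hfun : (fun ε : ℝ =>
          -(1 / 2 : ℝ) * ip (x + ε • h) (brk p (brk p (x + ε • h))))
          = fun ε : ℝ => (-(1 / 2 : ℝ) * ip x (brk p (brk p x)))
              + (-(ip (brk p (brk p x)) h)) * ε
              + (-(1 / 2 : ℝ) * ip h (brk p (brk p h))) * ε ^ 2 := by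
        funext ε
        simp only [brk_add_right, brk_smul_right, ip_add_right, ip_smul_right,
          ip_add_left, ip_smul_left, smul_smul, h3, h4]
        ring
      rw [hfun]
      have := ((hasDerivAt_const (0 : ℝ)
          (-(1 / 2 : ℝ) * ip x (brk p (brk p x)))).add
          ((hasDerivAt_id (0 : ℝ)).const_mul (-(ip (brk p (brk p x)) h)))).add
          ((hasDerivAt_pow 2 (0 : ℝ)).const_mul (-(1 / 2 : ℝ) * ip h (brk p (brk p h))))
      simpa [Pi.add_def] using this
    have hV := hgrad x h hx hh
    have hsum := hq.add hV
    exact hsum.congr_deriv (by ring)
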